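/- arXiv:1308.5149 — 7 statements merged into one kernel-verified Lean document; each statement's English description precedes it below -/
import Mathlib

section
/- Let T be an M×N complex matrix with M ≤ N that is full spark (every M columns of T are linearly independent). If M² ≥ N and 2M > N, then the Khatri-Rao product C = T̄ ⊙ T (the M²×N matrix whose j-th column is the Kronecker product of the conjugate of the j-th column of T with the j-th column of T) has full column rank N. -/
open Matrix

/-- Khatri-Rao product `T̄ ⊙ T`: the `M²×N` matrix whose `j`-th column is the
Kronecker product of the conjugate of the `j`-th column of `T` with the `j`-th column of `T`. -/
def khatriRaoConj {M N : ℕ} (T : Matrix (Fin M) (Fin N) ℂ) :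
    Matrix (Fin M × Fin M) (Fin N) ℂ :=
  fun p j => (starRingEnd ℂ) (T p.1 j) * T p.2 j

/-- `T` is full spark: every `M` columns of the `M×N` matrix `T` are linearly independent. -/
def FullSpark {M N : ℕ} (T : Matrix (Fin M) (Fin N) ℂ) : Prop :=
  ∀ S : Finset (Fin N), S.card = M →
    LinearIndependent ℂ (fun j : S => T.transpose j.1)

open Finset

-- key: coefficients of a small linear combination of columns vanish
lemma key_lemma {M N : ℕ} (T : Matrix (Fin M) (Fin N) ℂ) (hMN : M ≤ N)
    (hfs : FullSpark T) (S : Finset (Fin N)) (hS : S.card ≤ M)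
    (c : Fin N → ℂ) (hsum : ∑ j ∈ S, c j • (T.transpose j) = 0) :
    ∀ j ∈ S, c j = 0 := by
  obtain ⟨S', hSS', -, hS'c⟩ := Finset.exists_subsuperset_card_eq (Finset.subset_univ S) hS
    (by simpa using hMN)
  have hli := hfs S' hS'c
  rw [Fintype.linearIndependent_iff] at hli
  have hz := hli (fun j => if j.1 ∈ S then c j.1 else 0) ?_
  · intro j hj
    have := hz ⟨j, hSS' hj⟩
    simpa [hj] using this
  · show ∑ i : {x // x ∈ S'}, (if (i : Fin N) ∈ S then c i else 0) • T.transpose (i : Fin N) = 0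
    rw [Finset.sum_coe_sort S' (fun j => (if j ∈ S then c j else 0) • T.transpose j)]
    simp_rw [ite_smul, zero_smul]
    rw [Finset.sum_ite_mem, Finset.inter_eq_right.mpr hSS']
    exact hsum

-- subfamilies of ≤ M columns are linearly independent (as an indexed family on a finset)
lemma small_indep {M N : ℕ} (T : Matrix (Fin M) (Fin N) ℂ) (hMN : M ≤ N)
    (hfs : FullSpark T) (S : Finset (Fin N)) (hS : S.card ≤ M) :
    LinearIndependent ℂ (fun j : S => T.transpose j.1) := by
  rw [Fintype.linearIndependent_iff]
  intro g hg
  intro j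
  classical
  have hsum : ∑ i ∈ S, (if h : i ∈ S then g ⟨i, h⟩ else 0) • T.transpose i = 0 := by
    calc ∑ i ∈ S, (if h : i ∈ S then g ⟨i, h⟩ else 0) • T.transpose i
        = ∑ i : {x // x ∈ S}, (if h : (i : Fin N) ∈ S then g ⟨i, h⟩ else 0) •
            T.transpose (i : Fin N) :=
          (Finset.sum_coe_sort S
            (fun i => (if h : i ∈ S then g ⟨i, h⟩ else 0) • T.transpose i)).symm
      _ = ∑ i : {x // x ∈ S}, g i • T.transpose (i : Fin N) := by
          apply Finset.sum_congr rfl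
          rintro ⟨i, hi⟩ -
          rw [dif_pos hi]
      _ = 0 := hg
  have h := key_lemma T hMN hfs S hS (fun i => if h : i ∈ S then g ⟨i, h⟩ else 0) hsum
  have := h j.1 j.2
  simpa using this

-- existence of a separating vector
lemma exists_orth {M : ℕ} (v : Fin M → ℂ) (s : Set (Fin M → ℂ))
    (h : v ∉ Submodule.span ℂ s) :
    ∃ w : Fin M → ℂ, (∀ u ∈ s, ∑ p, (starRingEnd ℂ) (u p) * w p = 0) ∧
      ∑ p, (starRingEnd ℂ) (v p) * w p ≠ 0 := by
  let E := EuclideanSpace ℂ (Fin M)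
  let sE : Set E := WithLp.toLp 2 '' s
  let vE : E := WithLp.toLp 2 v
  have hE : vE ∉ Submodule.span ℂ sE := by
    intro hv
    apply h
    have := Submodule.apply_mem_span_image_iff_mem_span
      (f := (WithLp.linearEquiv 2 ℂ (Fin M → ℂ)).symm.toLinearMap) (x := v) (s := s)
      (WithLp.linearEquiv 2 ℂ (Fin M → ℂ)).symm.injective
    exact this.mp hv
  set V : Submodule ℂ E := Submodule.span ℂ sE with hV
  have htop : V ⊔ Vᗮ = ⊤ := Submodule.sup_orthogonal_of_hasOrthogonalProjection
  have hvmem : vE ∈ V ⊔ Vᗮ := htop ▸ Submodule.mem_top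
  obtain ⟨a, ha, w, hw, hsum⟩ := Submodule.mem_sup.mp hvmem
  have hwne : w ≠ 0 := by
    rintro rfl
    exact hE (by rw [← hsum, add_zero]; exact ha)
  refine ⟨w, ?_, ?_⟩
  · intro u hu
    have : (inner ℂ (show E from WithLp.toLp 2 u) w : ℂ) = 0 := (Submodule.mem_orthogonal V w).mp hw _
      (Submodule.subset_span ⟨u, hu, rfl⟩)
    rw [PiLp.inner_apply] at this
    simpa [RCLike.inner_apply, mul_comm] using this
  · have h1 : (inner ℂ a w : ℂ) = 0 := (Submodule.mem_orthogonal V w).mp hw a ha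
    have h2 : (inner ℂ vE w : ℂ) = inner ℂ a w + inner ℂ w w := by
      rw [← hsum]; exact inner_add_left a w w
    have h3 : (inner ℂ vE w : ℂ) ≠ 0 := by
      rw [h2, h1, zero_add]
      exact inner_self_ne_zero.mpr hwne
    rw [PiLp.inner_apply] at h3
    simpa [RCLike.inner_apply, mul_comm] using h3

theorem stmt0 {M N : ℕ} (T : Matrix (Fin M) (Fin N) ℂ)
    (hMN : M ≤ N) (hfs : FullSpark T)
    (h1 : N ≤ M ^ 2) (h2 : N < 2 * M) :
    LinearIndependent ℂ (fun j : Fin N => (khatriRaoConj T).transpose j) := by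
  classical
  rw [Fintype.linearIndependent_iff]
  intro g hg j₀
  -- pointwise form of hg
  have hpq : ∀ p q : Fin M, ∑ j, g j * ((starRingEnd ℂ) (T p j) * T q j) = 0 := by
    intro p q
    have := congrFun hg (p, q)
    simpa [khatriRaoConj, Finset.sum_apply] using this
  -- choose A₁ of size min (M-1) (N-1) inside univ.erase j₀
  have hcard_erase : (Finset.univ.erase j₀).card = N - 1 := by
    rw [Finset.card_erase_of_mem (Finset.mem_univ _)]; simp
  obtain ⟨A₁, hA₁sub, hA₁card⟩ := Finset.exists_subset_card_eq
    (s := Finset.univ.erase j₀) (n := min (M - 1) (N - 1))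
    (by rw [hcard_erase]; exact min_le_right _ _)
  set A₂ : Finset (Fin N) := (Finset.univ.erase j₀) \ A₁ with hA₂
  have hj₀A₁ : j₀ ∉ A₁ := fun h => (Finset.mem_erase.mp (hA₁sub h)).1 rfl
  -- t_{j₀} not in span of A₁ columns
  have hnotspan : T.transpose j₀ ∉
      Submodule.span ℂ ((fun j => T.transpose j) '' ↑A₁) := by
    have hins : (insert j₀ A₁).card ≤ M := by
      rw [Finset.card_insert_of_notMem hj₀A₁, hA₁card]
      have hM : 1 ≤ M := by omega
      have := min_le_left (M - 1) (N - 1)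
      omega
    have hli := small_indep T hMN hfs (insert j₀ A₁) hins
    have hx : (⟨j₀, Finset.mem_insert_self _ _⟩ : (insert j₀ A₁ : Finset (Fin N))) ∉
        {j : (insert j₀ A₁ : Finset (Fin N)) | j.1 ∈ A₁} := by
      simpa using hj₀A₁
    have hset : ((fun j : (insert j₀ A₁ : Finset (Fin N)) => T.transpose j.1) ''
        {j : (insert j₀ A₁ : Finset (Fin N)) | j.1 ∈ A₁})
        = (fun j => T.transpose j) '' ↑A₁ := by
      ext x
      constructor
      · rintro ⟨j, hj, rfl⟩
        exact ⟨j.1, hj, rfl⟩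
      · rintro ⟨j, hj, rfl⟩
        exact ⟨⟨j, Finset.mem_insert_of_mem hj⟩, hj, rfl⟩
    rw [← hset]
    exact hli.notMem_span_image hx
  obtain ⟨w, hw1, hw2⟩ := exists_orth (T.transpose j₀) _ hnotspan
  -- the derived dependency
  set d : Fin N → ℂ := fun j => g j * (∑ p, (starRingEnd ℂ) (T p j) * w p) with hd
  have hdq : ∀ q, ∑ j, d j * T q j = 0 := by
    intro q
    have hrw : ∑ j, d j * T q j
        = ∑ p, w p * (∑ j, g j * ((starRingEnd ℂ) (T p j) * T q j)) := by
      simp_rw [hd, Finset.mul_sum, Finset.sum_mul]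
      rw [Finset.sum_comm]
      apply Finset.sum_congr rfl; intro p _
      apply Finset.sum_congr rfl; intro j _
      ring
    rw [hrw]
    simp [hpq]
  have hdsum : ∑ j, d j • T.transpose j = 0 := by
    funext q
    simpa [Finset.sum_apply, Matrix.transpose_apply] using hdq q
  -- d vanishes on A₁
  have hdA₁ : ∀ j ∈ A₁, d j = 0 := by
    intro j hj
    have hz := hw1 (T.transpose j) ⟨j, hj, rfl⟩
    have hz' : (∑ p, (starRingEnd ℂ) (T p j) * w p) = 0 := by simpa using hz
    simp only [hd, hz', mul_zero]
  -- restrict the sum to insert j₀ A₂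
  have hSset : (Finset.univ : Finset (Fin N)) \ A₁ = insert j₀ A₂ := by
    ext x
    simp only [Finset.mem_sdiff, Finset.mem_univ, true_and, Finset.mem_insert, hA₂,
      Finset.mem_erase]
    by_cases hx : x = j₀
    · subst hx; simp [hj₀A₁]
    · simp [hx]
  have hsum' : ∑ j ∈ insert j₀ A₂, d j • T.transpose j = 0 := by
    rw [← hSset]
    rw [Finset.sum_sdiff_eq_sub (Finset.subset_univ A₁)]
    rw [hdsum]
    rw [Finset.sum_eq_zero (fun j hj => by rw [hdA₁ j hj, zero_smul])]
    simp
  have hScard : (insert j₀ A₂).card ≤ M := by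
    have hA₂card : A₂.card = (N - 1) - min (M - 1) (N - 1) := by
      rw [hA₂, Finset.card_sdiff_of_subset hA₁sub, hcard_erase, hA₁card]
    have := Finset.card_insert_le j₀ A₂
    have hmin : min (M - 1) (N - 1) = M - 1 ∨ min (M - 1) (N - 1) = N - 1 :=
      (min_choice _ _).imp id id
    have h1M : 1 ≤ M := by omega
    have h1N : 1 ≤ N := by omega
    rcases hmin with hm | hm <;> rw [hm] at hA₂card <;> omega
  have hkey := key_lemma T hMN hfs (insert j₀ A₂) hScard d hsum'
  have hd0 : d j₀ = 0 := hkey j₀ (Finset.mem_insert_self _ _)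
  simp only [hd] at hd0
  rcases mul_eq_zero.mp hd0 with h | h
  · exact h
  · exact absurd (by simpa using h) hw2
end

section
/- Let T be an M×N complex full spark matrix (M ≤ N) and let x ∈ ℂ^N with (T̄ ⊙ T)x = 0. If the number of nonzero entries of x is at most M, then x = 0. -/
open Matrix

theorem stmt2 {M N : ℕ} (T : Matrix (Fin M) (Fin N) ℂ)
    (hMN : M ≤ N) (hfs : FullSpark T)
    (x : Fin N → ℂ) (hx : (khatriRaoConj T).mulVec x = 0)
    (hsupp : {j | x j ≠ 0}.ncard ≤ M) :
    x = 0 := by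
  by_contra hne
  obtain ⟨j0, hj0⟩ : ∃ j, x j ≠ 0 := by
    by_contra h
    push_neg at h
    exact hne (funext fun j => h j)
  classical
  set s : Finset (Fin N) := Finset.univ.filter (fun j => x j ≠ 0) with hs
  have hset : {j | x j ≠ 0} = ↑s := by
    ext j; simp [hs]
  have hscard : s.card ≤ M := by
    have : {j | x j ≠ 0}.ncard = s.card := by
      rw [hset, Set.ncard_coe_finset]
    omega
  obtain ⟨S, hsS, hScard⟩ := Finset.exists_superset_card_eq hscard (by simpa using hMN)
  have hli := hfs S hScard
  have hxz : ∀ j : Fin N, j ∉ S → x j = 0 := by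
    intro j hj
    by_contra hxj
    exact hj (hsS (by simp [hs, hxj]))
  have key : ∀ p : Fin M, ∀ j : S, x j.1 * (starRingEnd ℂ) (T p j.1) = 0 := by
    intro p
    apply Fintype.linearIndependent_iff.mp hli
      (fun j => x j.1 * (starRingEnd ℂ) (T p j.1))
    funext q
    have h1 := congrFun hx (p, q)
    simp only [Matrix.mulVec, dotProduct, khatriRaoConj, Pi.zero_apply] at h1
    have h2 : ∑ j : Fin N, (starRingEnd ℂ) (T p j) * T q j * x j = 0 := h1
    have h3 : ∑ j ∈ S, (starRingEnd ℂ) (T p j) * T q j * x j = 0 := by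
      rw [← h2]
      refine Finset.sum_subset (Finset.subset_univ S) ?_
      intro j _ hj
      simp [hxz j hj]
    simp only [Finset.sum_apply, Pi.smul_apply, Pi.zero_apply, smul_eq_mul,
      Matrix.transpose_apply]
    calc ∑ j : S, x j.1 * (starRingEnd ℂ) (T p j.1) * T q j.1
        = ∑ j ∈ S, (starRingEnd ℂ) (T p j) * T q j * x j := by
          rw [← Finset.sum_attach S (fun j => (starRingEnd ℂ) (T p j) * T q j * x j)]
          exact Finset.sum_congr rfl fun j _ => by ring
      _ = 0 := h3
  have hj0S : j0 ∈ S := hsS (by simp [hs, hj0])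
  have hTcol : ∀ p, T p j0 = 0 := by
    intro p
    have h := key p ⟨j0, hj0S⟩
    have h2 : (starRingEnd ℂ) (T p j0) = 0 := by
      rcases mul_eq_zero.mp h with h' | h'
      · exact absurd h' hj0
      · exact h'
    simpa using congrArg (starRingEnd ℂ) h2
  apply hli.ne_zero ⟨j0, hj0S⟩
  funext p
  simpa [Matrix.transpose] using hTcol p
end

section
/- Let T be an M×N complex full spark matrix (M ≤ N), let x ∈ ℂ^N be a vector whose support Ω has size strictly greater than M, and define h_i ∈ ℂ^N by (h_i)_j = T_{ij} x_j for 1 ≤ i ≤ M. Then the vectors h_1, …, h_M are linearly independent. -/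
open Matrix

theorem stmt3 {M N : ℕ} (T : Matrix (Fin M) (Fin N) ℂ)
    (hMN : M ≤ N) (hfs : FullSpark T)
    (x : Fin N → ℂ) (hsupp : M < {j | x j ≠ 0}.ncard)
    (h : Fin M → Fin N → ℂ) (hh : ∀ i j, h i j = T i j * x j) :
    LinearIndependent ℂ h := by
  rw [Fintype.linearIndependent_iff]
  intro g hg
  have hsum : ∀ j, x j ≠ 0 → ∑ i, g i * T i j = 0 := by
    intro j hj
    have h1 := congrFun hg j
    simp only [Finset.sum_apply, Pi.smul_apply, smul_eq_mul, Pi.zero_apply, hh] at h1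
    have h2 : (∑ i, g i * T i j) * x j = 0 := by
      rw [Finset.sum_mul]
      simpa [mul_assoc] using h1
    exact (mul_eq_zero.mp h2).resolve_right hj
  -- pick a subset of the support of size M
  obtain ⟨t, hts, htc⟩ := Set.exists_subset_card_eq (le_of_lt hsupp)
  have htfin : t.Finite := Set.toFinite _
  set S : Finset (Fin N) := htfin.toFinset with hSdef
  have hScard : S.card = M := by
    rw [hSdef, ← Set.ncard_coe_finset]
    simpa using htc
  have hSsub : ∀ j ∈ S, x j ≠ 0 := by
    intro j hj
    have : j ∈ t := by simpa [hSdef] using hj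
    exact hts this
  have hli := hfs S hScard
  -- reindex to Fin M
  have hcard : Fintype.card S = M := by simpa using hScard
  let e : Fin M ≃ S := (Fintype.equivFinOfCardEq hcard).symm
  let A : Matrix (Fin M) (Fin M) ℂ := fun i k => T i (e k)
  have hliA : LinearIndependent ℂ (fun k : Fin M => Aᵀ k) := by
    have : (fun k : Fin M => Aᵀ k) = (fun j : S => T.transpose j.1) ∘ e := by
      funext k
      rfl
    rw [this]
    exact hli.comp e e.injective
  have hA : IsUnit A := linearIndependent_cols_iff_isUnit.mp hliA
  have hv : A.vecMul g = 0 := by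
    funext k
    simp only [vecMul, dotProduct, Pi.zero_apply]
    exact hsum (e k) (hSsub _ (e k).2)
  have hginj := vecMul_injective_iff_isUnit.mpr hA
  intro i
  have : g = 0 := hginj (by simpa using hv)
  simp [this]
end

section
/- Let T be an M×N complex full spark matrix (M ≤ N), and let S be any subset of {1,…,N} of size K_f with K_f ≤ M² and K_f < 2M. Then the M²×K_f matrix D whose columns are t̄_j ⊗ t_j for j ∈ S has full column rank K_f. -/
open Matrix

lemma fullspark_li {M N : ℕ} (T : Matrix (Fin M) (Fin N) ℂ) (hMN : M ≤ N)
    (hfs : FullSpark T) (S' : Finset (Fin N)) (h : S'.card ≤ M) :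
    LinearIndependent ℂ (fun j : S' => T.transpose j.1) := by
  obtain ⟨S'', hsub, -, hcard⟩ := Finset.exists_subsuperset_card_eq
    (Finset.subset_univ S') h (by simpa using hMN)
  exact (hfs S'' hcard).comp (fun j : ↥S' => (⟨j.1, hsub j.2⟩ : ↥S''))
    (by intro a b hab; have h := congrArg Subtype.val hab; exact Subtype.ext h)

lemma notmemspan {M N : ℕ} (T : Matrix (Fin M) (Fin N) ℂ) (hMN : M ≤ N)
    (hfs : FullSpark T) (P : Finset (Fin N)) (q : Fin N) (hq : q ∉ P)
    (hcard : P.card < M) :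
    T.transpose q ∉ Submodule.span ℂ (T.transpose '' ↑P) := by
  have hli := fullspark_li T hMN hfs (insert q P)
    (by rw [Finset.card_insert_of_notMem hq]; omega)
  have h := hli.notMem_span_image
    (s := {j : ↥(insert q P : Finset (Fin N)) | j.1 ∈ P})
    (x := ⟨q, Finset.mem_insert_self _ _⟩) (by simpa using hq)
  have himg : (fun j : ↥(insert q P : Finset (Fin N)) => T.transpose j.1) ''
      {j | j.1 ∈ P} = T.transpose '' ↑P := by
    ext y
    constructor
    · rintro ⟨j, hj, rfl⟩; exact ⟨j.1, hj, rfl⟩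
    · rintro ⟨a, ha, rfl⟩
      exact ⟨⟨a, Finset.mem_insert_of_mem ha⟩, ha, rfl⟩
  rwa [himg] at h

lemma core {M N : ℕ} (T : Matrix (Fin M) (Fin N) ℂ) (hMN : M ≤ N) (hfs : FullSpark T)
    (S : Finset (Fin N)) (c : ↥S → ℝ)
    (hrel : ∀ p q : Fin M, ∑ j : ↥S, (c j : ℂ) * (starRingEnd ℂ) (T p j.1) * T q j.1 = 0)
    (j0 : ↥S) (hj0 : c j0 < 0)
    (hP : (Finset.univ.filter fun j : ↥S => 0 < c j).card < M) : False := by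
  classical
  set Pt : Finset ↥S := Finset.univ.filter fun j : ↥S => 0 < c j with hPt
  set Pset : Finset (Fin N) := Pt.image Subtype.val with hPset
  have hPcard : Pset.card < M := lt_of_le_of_lt Finset.card_image_le hP
  have hqP : j0.1 ∉ Pset := by
    intro hmem
    rw [hPset, Finset.mem_image] at hmem
    obtain ⟨j, hj, hjeq⟩ := hmem
    rw [hPt, Finset.mem_filter] at hj
    have hje : j = j0 := Subtype.ext hjeq
    rw [hje] at hj; linarith [hj.2]
  have hnm := notmemspan T hMN hfs Pset j0.1 hqP hPcard
  obtain ⟨f, hf0, hfbot⟩ :=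
    (Submodule.span ℂ (T.transpose '' ↑Pset)).exists_dual_map_eq_bot_of_notMem hnm inferInstance
  set u : ↥S → ℂ := fun j => f (T.transpose j.1) with hu
  have hker : ∀ j : ↥S, 0 < c j → u j = 0 := by
    intro j hj
    have hmem : T.transpose j.1 ∈ Submodule.span ℂ (T.transpose '' ↑Pset) :=
      Submodule.subset_span ⟨j.1,
        Finset.mem_coe.2 (Finset.mem_image.2 ⟨j, Finset.mem_filter.2 ⟨Finset.mem_univ _, hj⟩, rfl⟩),
        rfl⟩
    have hmap := Submodule.mem_map_of_mem (f := f) hmem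
    rw [hfbot, Submodule.mem_bot] at hmap
    exact hmap
  set a : Fin M → ℂ := fun p => f (fun i => if p = i then 1 else 0) with ha
  have huj : ∀ j : ↥S, u j = ∑ q, T q j.1 * a q := by
    intro j
    rw [hu]
    simpa [ha, smul_eq_mul] using f.pi_apply_eq_sum_univ (T.transpose j.1)
  have key : ∑ j : ↥S, (c j : ℂ) * ((starRingEnd ℂ) (u j) * u j) = 0 := by
    calc ∑ j : ↥S, (c j : ℂ) * ((starRingEnd ℂ) (u j) * u j)
        = ∑ j : ↥S, ∑ p, ∑ q, (starRingEnd ℂ) (a p) * a q *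
            ((c j : ℂ) * (starRingEnd ℂ) (T p j.1) * T q j.1) := by
          refine Finset.sum_congr rfl fun j _ => ?_
          rw [huj j, map_sum, Finset.sum_mul_sum, Finset.mul_sum]
          refine Finset.sum_congr rfl fun p _ => ?_
          rw [Finset.mul_sum]
          refine Finset.sum_congr rfl fun q _ => ?_
          simp only [_root_.map_mul]; ring
      _ = ∑ p, ∑ q, (starRingEnd ℂ) (a p) * a q *
            (∑ j : ↥S, (c j : ℂ) * (starRingEnd ℂ) (T p j.1) * T q j.1) := by
          rw [Finset.sum_comm]
          refine Finset.sum_congr rfl fun p _ => ?_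
          rw [Finset.sum_comm]
          refine Finset.sum_congr rfl fun q _ => ?_
          rw [Finset.mul_sum]
      _ = 0 := by
          simp only [← Finset.univ_eq_attach, hrel, mul_zero]
          simp
  have keyR : ∑ j : ↥S, c j * Complex.normSq (u j) = 0 := by
    have hcast : ((∑ j : ↥S, c j * Complex.normSq (u j) : ℝ) : ℂ) = 0 := by
      push_cast
      rw [← key]
      refine Finset.sum_congr rfl fun j _ => ?_
      rw [Complex.normSq_eq_conj_mul_self]
    exact_mod_cast hcast
  have hneg : ∑ j : ↥S, c j * Complex.normSq (u j) < 0 := by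
    have hlt : c j0 * Complex.normSq (u j0) < 0 :=
      mul_neg_of_neg_of_pos hj0 (Complex.normSq_pos.2 hf0)
    have := Finset.sum_lt_sum (f := fun j : ↥S => c j * Complex.normSq (u j)) (g := fun _ : ↥S => (0:ℝ))
      (fun j _ => by
        rcases le_or_gt (c j) 0 with h|h
        · simpa using mul_nonpos_iff.2 (Or.inr ⟨h, Complex.normSq_nonneg (u j)⟩)
        · simp [hker j h])
      ⟨j0, Finset.mem_univ _, hlt⟩
    simpa using this
  exact absurd keyR (ne_of_lt hneg)

lemma core2 {M N Kf : ℕ} (T : Matrix (Fin M) (Fin N) ℂ) (hMN : M ≤ N) (hfs : FullSpark T)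
    (S : Finset (Fin N)) (hS : S.card = Kf) (h2 : Kf < 2 * M)
    (c : ↥S → ℝ)
    (hrel : ∀ p q : Fin M, ∑ j : ↥S, (c j : ℂ) * (starRingEnd ℂ) (T p j.1) * T q j.1 = 0) :
    ∀ j, c j = 0 := by
  classical
  have hrelneg : ∀ (d : ↥S → ℝ),
      (∀ p q : Fin M, ∑ j : ↥S, (d j : ℂ) * (starRingEnd ℂ) (T p j.1) * T q j.1 = 0) →
      ∀ p q : Fin M, ∑ j : ↥S, ((-d) j : ℂ) * (starRingEnd ℂ) (T p j.1) * T q j.1 = 0 := by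
    intro d hd p q
    have h := hd p q
    have : ∑ j : ↥S, ((-d) j : ℂ) * (starRingEnd ℂ) (T p j.1) * T q j.1
        = -∑ j : ↥S, (d j : ℂ) * (starRingEnd ℂ) (T p j.1) * T q j.1 := by
      rw [← Finset.sum_neg_distrib]
      exact Finset.sum_congr rfl fun j _ => by simp only [Pi.neg_apply]; push_cast; ring
    rw [this, h, neg_zero]
  have aux : ∀ d : ↥S → ℝ,
      (∀ p q : Fin M, ∑ j : ↥S, (d j : ℂ) * (starRingEnd ℂ) (T p j.1) * T q j.1 = 0) →
      ∀ j0 : ↥S, d j0 < 0 → False := by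
    intro d hd j0 hj0
    have hKf : 1 ≤ Kf := by
      rw [← hS]
      exact Finset.card_pos.2 ⟨j0.1, j0.2⟩
    have hM : 1 ≤ M := by omega
    have hcards : (Finset.univ.filter fun j : ↥S => 0 < d j).card
        + (Finset.univ.filter fun j : ↥S => d j < 0).card ≤ Kf := by
      have hdisj : Disjoint (Finset.univ.filter fun j : ↥S => 0 < d j)
          (Finset.univ.filter fun j : ↥S => d j < 0) := by
        rw [Finset.disjoint_left]
        intro a ha hb
        rw [Finset.mem_filter] at ha hb
        linarith [ha.2, hb.2]
      rw [← Finset.card_union_of_disjoint hdisj]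
      have := Finset.card_le_card (Finset.subset_univ
        ((Finset.univ.filter fun j : ↥S => 0 < d j) ∪ (Finset.univ.filter fun j : ↥S => d j < 0)))
      rwa [Finset.card_univ, Fintype.card_coe, hS] at this
    rcases lt_or_ge (Finset.univ.filter fun j : ↥S => 0 < d j).card M with hc|hc
    · exact core T hMN hfs S d hd j0 hj0 hc
    · have hne : (Finset.univ.filter fun j : ↥S => 0 < d j).Nonempty :=
        Finset.card_pos.1 (by omega)
      obtain ⟨j1, hj1⟩ := hne
      rw [Finset.mem_filter] at hj1
      have heq : (Finset.univ.filter fun j : ↥S => 0 < (-d) j)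
          = (Finset.univ.filter fun j : ↥S => d j < 0) := by
        apply Finset.filter_congr
        intro j _
        simp [neg_pos]
      have hQ : (Finset.univ.filter fun j : ↥S => 0 < (-d) j).card < M := by
        rw [heq]; omega
      exact core T hMN hfs S (-d) (hrelneg d hd) j1 (by simpa using hj1.2) hQ
  intro j
  by_contra hj
  rcases lt_or_gt_of_ne hj with h|h
  · exact aux c hrel j h
  · exact aux (-c) (hrelneg c hrel) j (by simpa using h)

theorem stmt6 {M N Kf : ℕ} (T : Matrix (Fin M) (Fin N) ℂ)
    (hMN : M ≤ N) (hfs : FullSpark T)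
    (S : Finset (Fin N)) (hS : S.card = Kf)
    (h1 : Kf ≤ M ^ 2) (h2 : Kf < 2 * M) :
    LinearIndependent ℂ (fun j : S => (khatriRaoConj T).transpose j.1) := by
  classical
  rw [Fintype.linearIndependent_iff]
  intro g hg
  have hE1 : ∀ p q : Fin M,
      ∑ j : ↥S, g j * ((starRingEnd ℂ) (T p j.1) * T q j.1) = 0 := by
    intro p q
    have h := congrFun hg (p, q)
    simpa [khatriRaoConj, Finset.sum_apply, ← Finset.univ_eq_attach] using h
  have hE2 : ∀ p q : Fin M,
      ∑ j : ↥S, (starRingEnd ℂ) (g j) * ((starRingEnd ℂ) (T p j.1) * T q j.1) = 0 := by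
    intro p q
    calc ∑ j : ↥S, (starRingEnd ℂ) (g j) * ((starRingEnd ℂ) (T p j.1) * T q j.1)
        = (starRingEnd ℂ) (∑ j : ↥S, g j * ((starRingEnd ℂ) (T q j.1) * T p j.1)) := by
          rw [map_sum]
          refine Finset.sum_congr rfl fun j _ => ?_
          simp only [_root_.map_mul, Complex.conj_conj]
          ring
      _ = 0 := by rw [hE1 q p, map_zero]
  set c1 : ↥S → ℝ := fun j => (g j).re with hc1
  set c2 : ↥S → ℝ := fun j => (g j).im with hc2
  have hrel1 : ∀ p q : Fin M,
      ∑ j : ↥S, ((c1 j : ℝ) : ℂ) * (starRingEnd ℂ) (T p j.1) * T q j.1 = 0 := by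
    intro p q
    calc ∑ j : ↥S, ((c1 j : ℝ) : ℂ) * (starRingEnd ℂ) (T p j.1) * T q j.1
        = (∑ j : ↥S, g j * ((starRingEnd ℂ) (T p j.1) * T q j.1)
            + ∑ j : ↥S, (starRingEnd ℂ) (g j) * ((starRingEnd ℂ) (T p j.1) * T q j.1)) / 2 := by
          rw [← Finset.sum_add_distrib, Finset.sum_div]
          refine Finset.sum_congr rfl fun j _ => ?_
          have hre : ((c1 j : ℝ) : ℂ) * 2 = g j + (starRingEnd ℂ) (g j) := by
            rw [Complex.add_conj, hc1]; push_cast; ring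
          field_simp
          linear_combination ((starRingEnd ℂ) (T p j.1) * T q j.1) * hre
      _ = 0 := by rw [hE1 p q, hE2 p q]; ring
  have hrel2 : ∀ p q : Fin M,
      ∑ j : ↥S, ((c2 j : ℝ) : ℂ) * (starRingEnd ℂ) (T p j.1) * T q j.1 = 0 := by
    intro p q
    have hmul : (2 * Complex.I)
        * ∑ j : ↥S, ((c2 j : ℝ) : ℂ) * (starRingEnd ℂ) (T p j.1) * T q j.1
        = ∑ j : ↥S, g j * ((starRingEnd ℂ) (T p j.1) * T q j.1)
          - ∑ j : ↥S, (starRingEnd ℂ) (g j) * ((starRingEnd ℂ) (T p j.1) * T q j.1) := by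
      rw [← Finset.sum_sub_distrib, Finset.mul_sum]
      refine Finset.sum_congr rfl fun j _ => ?_
      have him : g j - (starRingEnd ℂ) (g j) = ((c2 j : ℝ) : ℂ) * 2 * Complex.I := by
        rw [Complex.sub_conj, hc2]; push_cast; ring
      linear_combination ((starRingEnd ℂ) (T p j.1) * T q j.1) * him.symm
    rw [hE1 p q, hE2 p q, sub_zero] at hmul
    rcases mul_eq_zero.1 hmul with h|h
    · exfalso
      have : (2 : ℂ) * Complex.I ≠ 0 := by
        simp [Complex.I_ne_zero]
      exact this h
    · exact h
  intro j
  have hre := core2 T hMN hfs S hS h2 c1 hrel1 j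
  have him := core2 T hMN hfs S hS h2 c2 hrel2 j
  exact Complex.ext hre him
end

section
/- Let T be an M×N complex full spark matrix with M ≥ 2 and M ≤ N. Then the spark of the Khatri-Rao product Φ = T̄ ⊙ T satisfies spark(Φ) ≥ 2M; consequently, any vector r with at most K_f < M nonzero entries is the unique K_f-sparse solution of Φ r = z for z = Φ r. -/
open Matrix

section Aux

variable {M N : ℕ}

/-- Any subset of at most `M` columns of a full-spark matrix is linearly independent. -/
lemma liSubset (T : Matrix (Fin M) (Fin N) ℂ) (hMN : M ≤ N) (hfs : FullSpark T)
    (A : Finset (Fin N)) (hA : A.card ≤ M) :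
    LinearIndependent ℂ (fun j : A => T.transpose j.1) := by
  obtain ⟨B, hAB, hB⟩ := Finset.exists_superset_card_eq hA (by simpa using hMN)
  have h := hfs B hB
  have heq : (fun j : A => T.transpose j.1)
      = (fun j : B => T.transpose j.1) ∘ (fun j : A => (⟨j.1, hAB j.2⟩ : B)) := rfl
  rw [heq]
  exact h.comp _ (fun a b hab => Subtype.ext (by
    simpa using congrArg Subtype.val hab))

/-- Star of a linearly independent family of columns is linearly independent. -/
lemma liStar (T : Matrix (Fin M) (Fin N) ℂ) (Q : Finset (Fin N))
    (h : LinearIndependent ℂ (fun j : Q => T.transpose j.1)) :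
    LinearIndependent ℂ (fun j : Q => fun i => star (T i j.1)) := by
  rw [Fintype.linearIndependent_iff] at h ⊢
  intro g hg j
  have h2 : ∑ j : Q, star (g j) • T.transpose j.1 = 0 := by
    funext i
    have hgi := congrFun hg i
    simp only [Finset.sum_apply, Pi.smul_apply, smul_eq_mul, Pi.zero_apply] at hgi ⊢
    calc ∑ x : Q, star (g x) * T.transpose x.1 i
        = star (∑ x : Q, g x * star (T i x.1)) := by
          rw [star_sum]
          exact Finset.sum_congr rfl fun x _ => by
            simp [transpose_apply, mul_comm]
      _ = 0 := by rw [hgi]; simp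
  exact star_eq_zero.mp (h _ h2 j)

/-- Dual vector construction: for `M` linearly independent columns, there is a vector
whose star-inner-products with those columns are a Kronecker delta. -/
lemma existsDual (T : Matrix (Fin M) (Fin N) ℂ) (Q : Finset (Fin N)) (hQ : Q.card = M)
    (hli : LinearIndependent ℂ (fun j : Q => T.transpose j.1)) (j0 : Fin N) (hj0 : j0 ∈ Q) :
    ∃ x : Fin M → ℂ, ∀ j ∈ Q, (∑ i, star (T i j) * x i) = if j = j0 then 1 else 0 := by
  haveI : Nonempty ↥Q := ⟨⟨j0, hj0⟩⟩
  have hw := liStar T Q hli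
  have hcard : Fintype.card ↥Q = Module.finrank ℂ (Fin M → ℂ) := by
    simp [Fintype.card_coe, hQ, Module.finrank_fintype_fun_eq_card]
  have hspan := hw.span_eq_top_of_card_eq_finrank hcard
  let F : (Fin M → ℂ) →ₗ[ℂ] (↥Q → ℂ) :=
    { toFun := fun x j => ∑ i, star (T i j.1) * x i
      map_add' := by
        intro x y; funext j
        simp [mul_add, Finset.sum_add_distrib]
      map_smul' := by
        intro a x; funext j
        simp [Finset.mul_sum, Pi.smul_apply, smul_eq_mul, mul_left_comm] }
  have hinj : Function.Injective F := by
    rw [← LinearMap.ker_eq_bot, LinearMap.ker_eq_bot']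
    intro x hx
    let G : (Fin M → ℂ) →ₗ[ℂ] ℂ :=
      { toFun := fun y => ∑ i, y i * x i
        map_add' := by intro y z; simp [add_mul, Finset.sum_add_distrib]
        map_smul' := by intro a y; simp [Finset.mul_sum, smul_eq_mul, mul_assoc]
      }
    have hGw : ∀ j : Q, G (fun i => star (T i j.1)) = 0 := fun j => congrFun hx j
    have hle : Submodule.span ℂ (Set.range (fun j : Q => fun i => star (T i j.1)))
        ≤ LinearMap.ker G := by
      rw [Submodule.span_le]
      rintro _ ⟨j, rfl⟩
      exact hGw j
    rw [hspan] at hle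
    have hG0 : ∀ y, G y = 0 := fun y => hle (Submodule.mem_top)
    funext i
    have := hG0 (Pi.single i 1)
    simpa [G, Pi.single_apply, ite_mul] using this
  have hsurj : Function.Surjective F :=
    (LinearMap.injective_iff_surjective_of_finrank_eq_finrank
      (by simp [Module.finrank_fintype_fun_eq_card, Fintype.card_coe, hQ])).mp hinj
  obtain ⟨x, hx⟩ := hsurj (fun j => if j.1 = j0 then 1 else 0)
  exact ⟨x, fun j hj => by simpa [F] using congrFun hx ⟨j, hj⟩⟩

/-- Core spark bound: every set of fewer than `2M` columns of the conjugate
Khatri-Rao product is linearly independent. -/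
lemma krSpark (T : Matrix (Fin M) (Fin N) ℂ) (hM : 2 ≤ M) (hMN : M ≤ N)
    (hfs : FullSpark T) :
    ∀ S : Finset (Fin N), S.card < 2 * M →
      LinearIndependent ℂ (fun j : S => (khatriRaoConj T).transpose j.1) := by
  classical
  intro S hS
  rw [Fintype.linearIndependent_iff]
  intro g hg
  by_contra hcon
  push_neg at hcon
  obtain ⟨j1, hj1⟩ := hcon
  set c : Fin N → ℂ := fun j => if h : j ∈ S then g ⟨j, h⟩ else 0 with hc
  have hcS : ∀ j ∉ S, c j = 0 := fun j hj => by simp [hc, dif_neg hj]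
  have hrel : ∀ i k : Fin M, ∑ j : Fin N, c j * (star (T i j) * T k j) = 0 := by
    intro i k
    have h0 := congrFun hg (i, k)
    simp only [Finset.sum_apply, Pi.smul_apply, smul_eq_mul, Pi.zero_apply,
      transpose_apply, khatriRaoConj, starRingEnd_apply] at h0
    have e1 : ∑ j ∈ S, c j * (star (T i j) * T k j)
        = ∑ j : Fin N, c j * (star (T i j) * T k j) :=
      Finset.sum_subset (Finset.subset_univ S)
        (fun j _ hj => by rw [hcS j hj, zero_mul])
    have e2 : ∑ j : S, g j * (star (T i j.1) * T k j.1)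
        = ∑ j ∈ S, c j * (star (T i j) * T k j) := by
      rw [← Finset.sum_coe_sort S (fun j => c j * (star (T i j) * T k j))]
      exact Finset.sum_congr rfl fun j _ => by simp [hc, dif_pos j.2]
    rw [← e1, ← e2]
    exact h0
  set α : Fin N → (Fin M → ℂ) → ℂ := fun j x => ∑ i, star (T i j) * x i with hα
  have hkey : ∀ (x : Fin M → ℂ) (k : Fin M),
      ∑ j : Fin N, c j * α j x * T k j = 0 := by
    intro x k
    have e1 : ∀ j, c j * α j x * T k j
        = ∑ i, x i * (c j * (star (T i j) * T k j)) := by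
      intro j
      rw [hα]
      simp only []
      rw [Finset.mul_sum, Finset.sum_mul]
      exact Finset.sum_congr rfl fun i _ => by ring
    rw [Finset.sum_congr rfl (fun j _ => e1 j), Finset.sum_comm]
    have e2 : ∀ i : Fin M, ∑ j : Fin N, x i * (c j * (star (T i j) * T k j)) = 0 := by
      intro i; rw [← Finset.mul_sum, hrel, mul_zero]
    exact Finset.sum_eq_zero fun i _ => e2 i
  set supp := Finset.univ.filter (fun j => c j ≠ 0) with hsupp
  have hmemsupp : ∀ j, j ∈ supp ↔ c j ≠ 0 := fun j => by simp [hsupp]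
  have hsuppS : supp ⊆ S := by
    intro j hj
    rw [hmemsupp] at hj
    by_contra hjS
    exact hj (hcS j hjS)
  have hsc : supp.card ≤ 2 * M - 1 :=
    le_trans (Finset.card_le_card hsuppS) (by omega)
  have hcj1 : c j1.1 ≠ 0 := by
    have : c j1.1 = g j1 := by simp [hc, dif_pos j1.2]
    rw [this]; exact hj1
  have hj1supp : j1.1 ∈ supp := (hmemsupp _).mpr hcj1
  -- common contradiction machinery
  have main : ∀ (A : Finset (Fin N)), A.card ≤ M → ∀ x : Fin M → ℂ,
      (∀ j, j ∉ A → c j * α j x = 0) →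
      ∀ j ∈ A, c j * α j x = 0 := by
    intro A hAcard x hvan
    have hli := liSubset T hMN hfs A hAcard
    rw [Fintype.linearIndependent_iff] at hli
    have hsum : ∑ j : A, (fun j : A => c j.1 * α j.1 x) j • T.transpose j.1 = 0 := by
      funext k
      simp only [Finset.sum_apply, Pi.smul_apply, smul_eq_mul, transpose_apply,
        Pi.zero_apply]
      rw [Finset.sum_coe_sort A (fun j => c j * α j x * T k j)]
      rw [Finset.sum_subset (Finset.subset_univ A)
        (fun j _ hj => by rw [hvan j hj, zero_mul])]
      exact hkey x k
    intro j hj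
    exact hli _ hsum ⟨j, hj⟩
  by_cases hcase : supp.card ≤ M
  · -- small support : test against the column j1 itself
    set x : Fin M → ℂ := fun i => T i j1.1 with hx
    have hvan : ∀ j, j ∉ supp → c j * α j x = 0 := by
      intro j hj
      have : c j = 0 := by
        by_contra h; exact hj ((hmemsupp j).mpr h)
      rw [this, zero_mul]
    have h0 := main supp hcase x hvan j1.1 hj1supp
    have hαx : α j1.1 x = ∑ i, (Complex.normSq (T i j1.1) : ℂ) := by
      rw [hα]
      exact Finset.sum_congr rfl fun i _ => by
        rw [Complex.normSq_eq_conj_mul_self]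
        simp [hx, Complex.star_def]
    have hTne : T.transpose j1.1 ≠ 0 := by
      have hone : ({j1.1} : Finset (Fin N)).card ≤ M := by simp; omega
      exact (liSubset T hMN hfs {j1.1} hone).ne_zero
        ⟨j1.1, Finset.mem_singleton_self _⟩
    have hαne : α j1.1 x ≠ 0 := by
      rw [hαx]
      intro hzero
      have hreal : ∑ i, Complex.normSq (T i j1.1) = 0 := by
        have := hzero
        push_cast at this
        exact_mod_cast this
      have hall : ∀ i ∈ Finset.univ, Complex.normSq (T i j1.1) = 0 :=
        (Finset.sum_eq_zero_iff_of_nonneg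
          (fun i _ => Complex.normSq_nonneg _)).mp hreal
      apply hTne
      funext i
      have := hall i (Finset.mem_univ i)
      simpa [transpose_apply] using Complex.normSq_eq_zero.mp this
    exact hcj1 (by
      rcases mul_eq_zero.mp h0 with h | h
      · exact h
      · exact absurd h hαne)
  · -- large support : use a dual vector
    push_neg at hcase
    obtain ⟨Q, hQsub, hQcard⟩ := Finset.exists_subset_card_eq hcase.le
    obtain ⟨j0, hj0Q⟩ := Finset.card_pos.mp (by rw [hQcard]; omega)
    obtain ⟨x, hdual⟩ := existsDual T Q hQcard
      (liSubset T hMN hfs Q hQcard.le) j0 hj0Q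
    set A := (supp \ Q) ∪ {j0} with hA
    have hj0A : j0 ∈ A := by simp [hA]
    have hAcard : A.card ≤ M := by
      calc A.card ≤ (supp \ Q).card + ({j0} : Finset (Fin N)).card :=
            Finset.card_union_le _ _
        _ = supp.card - M + 1 := by rw [Finset.card_sdiff_of_subset hQsub, hQcard]; simp
        _ ≤ M := by omega
    have hαdef : ∀ j, α j x = ∑ i, star (T i j) * x i := fun j => by rw [hα]
    have hvan : ∀ j, j ∉ A → c j * α j x = 0 := by
      intro j hjA
      by_cases hjs : j ∈ supp
      · have hjQ : j ∈ Q := by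
          by_contra hq
          exact hjA (Finset.mem_union_left _ (Finset.mem_sdiff.mpr ⟨hjs, hq⟩))
        have hjne : j ≠ j0 := by
          intro h
          exact hjA (by rw [h]; exact hj0A)
        have : α j x = 0 := by
          rw [hαdef j, hdual j hjQ, if_neg hjne]
        rw [this, mul_zero]
      · have : c j = 0 := by
          by_contra h; exact hjs ((hmemsupp j).mpr h)
        rw [this, zero_mul]
    have h0 := main A hAcard x hvan j0 hj0A
    have hα1 : α j0 x = 1 := by
      rw [hαdef j0, hdual j0 hj0Q, if_pos rfl]
    have hcj0 : c j0 ≠ 0 := (hmemsupp j0).mp (hQsub hj0Q)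
    rw [hα1, mul_one] at h0
    exact hcj0 h0

end Aux

/-- spark(Φ) ≥ 2M, expressed as: every set of fewer than 2M columns of Φ is
linearly independent; together with the uniqueness of sparse solutions. -/
theorem stmt7 {M N : ℕ} (T : Matrix (Fin M) (Fin N) ℂ)
    (hM : 2 ≤ M) (hMN : M ≤ N) (hfs : FullSpark T) :
    (∀ S : Finset (Fin N), S.card < 2 * M →
      LinearIndependent ℂ (fun j : S => (khatriRaoConj T).transpose j.1)) ∧
    (∀ Kf : ℕ, Kf < M → ∀ r r' : Fin N → ℂ,
      {j | r j ≠ 0}.ncard ≤ Kf → {j | r' j ≠ 0}.ncard ≤ Kf →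
      (khatriRaoConj T).mulVec r' = (khatriRaoConj T).mulVec r → r' = r) := by
  classical
  have h1 := krSpark T hM hMN hfs
  refine ⟨h1, ?_⟩
  intro Kf hKf r r' hr hr' heq
  set d : Fin N → ℂ := r' - r with hd
  set Sd := Finset.univ.filter (fun j => d j ≠ 0) with hSd
  have hmem : ∀ j, j ∈ Sd ↔ d j ≠ 0 := fun j => by simp [hSd]
  have hcard_r : (Finset.univ.filter (fun j => r j ≠ 0)).card ≤ Kf := by
    have : {j | r j ≠ 0}.ncard = (Finset.univ.filter (fun j => r j ≠ 0)).card := by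
      rw [Set.ncard_eq_toFinset_card']
      congr 1
      ext j
      simp
    omega
  have hcard_r' : (Finset.univ.filter (fun j => r' j ≠ 0)).card ≤ Kf := by
    have : {j | r' j ≠ 0}.ncard = (Finset.univ.filter (fun j => r' j ≠ 0)).card := by
      rw [Set.ncard_eq_toFinset_card']
      congr 1
      ext j
      simp
    omega
  have hsub : Sd ⊆ (Finset.univ.filter (fun j => r j ≠ 0))
      ∪ (Finset.univ.filter (fun j => r' j ≠ 0)) := by
    intro j hj
    rw [hmem] at hj
    simp only [Finset.mem_union, Finset.mem_filter, Finset.mem_univ, true_and]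
    by_contra hcon
    push_neg at hcon
    apply hj
    simp [hd, hcon.1, hcon.2]
  have hSdcard : Sd.card < 2 * M := by
    have := Finset.card_le_card hsub
    have := Finset.card_union_le (Finset.univ.filter (fun j => r j ≠ 0))
      (Finset.univ.filter (fun j => r' j ≠ 0))
    omega
  have hli := h1 Sd hSdcard
  rw [Fintype.linearIndependent_iff] at hli
  have hmv : (khatriRaoConj T).mulVec d = 0 := by
    rw [hd, Matrix.mulVec_sub, heq, sub_self]
  have hsum : ∑ j : Sd, (fun j : Sd => d j.1) j • (khatriRaoConj T).transpose j.1 = 0 := by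
    funext p
    simp only [Finset.sum_apply, Pi.smul_apply, smul_eq_mul, transpose_apply,
      Pi.zero_apply]
    rw [Finset.sum_coe_sort Sd (fun j => d j * khatriRaoConj T p j)]
    rw [Finset.sum_subset (Finset.subset_univ Sd) (fun j _ hj => by
      have : d j = 0 := by
        by_contra h; exact hj ((hmem j).mpr h)
      rw [this, zero_mul])]
    have := congrFun hmv p
    simp only [Matrix.mulVec, dotProduct, Pi.zero_apply] at this
    rw [← this]
    exact Finset.sum_congr rfl fun j _ => mul_comm _ _
  have hall : ∀ j, d j = 0 := by
    intro j
    by_cases hj : j ∈ Sd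
    · exact hli (fun j : Sd => d j.1) hsum ⟨j, hj⟩
    · by_contra h; exact hj ((hmem j).mpr h)
  have : d = 0 := funext hall
  rw [hd] at this
  exact sub_eq_zero.mp this
end

section
/- Let Φ be an M²×N complex matrix with spark(Φ) ≥ 2M, and suppose r(f), f in some index set F, is a family of vectors in ℂ^N all supported on a common set S with |S| ≤ K_f < M. Let Q = Σ_f Φ r(f) r(f)^H Φ^H and write Q = V V^H for any matrix V whose columns span the range of Q. Then the support of the unique row-sparsest solution U of V = Φ U equals the common support of the rowspace-generating solution, i.e., the joint support S is recoverable from Q. -/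
open Matrix

theorem stmt17 {M N Kf L : ℕ} {F : Type*} [Fintype F]
    (Φ : Matrix (Fin M × Fin M) (Fin N) ℂ)
    (hspark : ∀ S : Finset (Fin N), S.card < 2 * M →
      LinearIndependent ℂ (fun j : S => Φ.transpose j.1))
    (r : F → Fin N → ℂ) (S : Set (Fin N))
    (hsupp : ∀ f : F, Function.support (r f) ⊆ S)
    (hS : S.ncard ≤ Kf) (hKf : Kf < M)
    (Q : Matrix (Fin M × Fin M) (Fin M × Fin M) ℂ)
    (hQ : Q = ∑ f : F,
      Matrix.of (fun p q => Φ.mulVec (r f) p * (starRingEnd ℂ) (Φ.mulVec (r f) q)))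
    (V : Matrix (Fin M × Fin M) (Fin L) ℂ)
    (hV : Q = V * V.conjTranspose)
    (hspan : Submodule.span ℂ (Set.range V.transpose) =
      Submodule.span ℂ (Set.range Q.transpose)) :
    (∃ U : Matrix (Fin N) (Fin L) ℂ, Φ * U = V ∧
      {i | ∃ l, U i l ≠ 0} = ⋃ f : F, Function.support (r f)) ∧
    (∀ U : Matrix (Fin N) (Fin L) ℂ, Φ * U = V →
      {i | ∃ l, U i l ≠ 0}.ncard ≤ Kf →
      {i | ∃ l, U i l ≠ 0} = ⋃ f : F, Function.support (r f)) := by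
  classical
  set S' : Set (Fin N) := ⋃ f : F, Function.support (r f) with hS'def
  have hS'S : S' ⊆ S := Set.iUnion_subset hsupp
  have hS'card : S'.ncard ≤ Kf :=
    le_trans (Set.ncard_le_ncard hS'S (Set.toFinite S)) hS
  -- key injectivity lemma
  have hker : ∀ (T : Set (Fin N)), T.ncard < 2 * M → ∀ x : Fin N → ℂ,
      Function.support x ⊆ T → Φ.mulVec x = 0 → x = 0 := by
    intro T hT x hx hΦx
    have hTfin : T.Finite := Set.toFinite T
    have hcard : hTfin.toFinset.card < 2 * M := by
      rwa [← Set.ncard_eq_toFinset_card T hTfin]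
    have hli := hspark hTfin.toFinset hcard
    rw [Fintype.linearIndependent_iff] at hli
    have hsum : ∑ j : hTfin.toFinset, x j.1 • (fun p => Φ p j.1) = (0 : Fin M × Fin M → ℂ) := by
      funext p
      have h1 : (∑ j : hTfin.toFinset, x j.1 • (fun p => Φ p j.1)) p
          = ∑ j ∈ hTfin.toFinset, x j * Φ p j := by
        rw [Finset.sum_apply]
        rw [← Finset.sum_attach hTfin.toFinset (fun j => x j * Φ p j)]
        simp [mul_comm]
      have h2 : ∑ j ∈ hTfin.toFinset, x j * Φ p j = ∑ j : Fin N, x j * Φ p j := by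
        apply Finset.sum_subset (Finset.subset_univ _)
        intro j _ hj
        have : x j = 0 := by
          by_contra h
          exact hj (hTfin.mem_toFinset.2 (hx h))
        simp [this]
      have h3 : Φ.mulVec x p = 0 := by rw [hΦx]; rfl
      rw [h1, h2]
      rw [Matrix.mulVec, dotProduct] at h3
      simpa [mul_comm] using h3
    funext j
    by_cases hj : j ∈ T
    · exact hli _ hsum ⟨j, hTfin.mem_toFinset.2 hj⟩
    · by_contra h
      exact hj (hx h)
  -- injectivity on pairs supported by small sets
  have hinjpair : ∀ (x y : Fin N → ℂ), Function.support x ⊆ S' →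
      (Function.support y).ncard ≤ Kf → Φ.mulVec x = Φ.mulVec y → x = y := by
    intro x y hxs hys hxy
    have hsub : Function.support (x - y) ⊆ S' ∪ Function.support y := by
      intro i hi
      by_cases h : x i = 0
      · right
        simp only [Function.mem_support, Pi.sub_apply] at hi ⊢
        intro hy; exact hi (by rw [h, hy, sub_zero])
      · exact Or.inl (hxs h)
    have hcard : (S' ∪ Function.support y).ncard < 2 * M := by
      calc (S' ∪ Function.support y).ncard ≤ S'.ncard + (Function.support y).ncard :=
            Set.ncard_union_le _ _
        _ ≤ Kf + Kf := add_le_add hS'card hys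
        _ < 2 * M := by omega
    have := hker _ hcard (x - y) hsub (by
      have : Φ.mulVecLin (x - y) = 0 := by
        rw [map_sub]; simp only [Matrix.mulVecLin_apply, hxy, sub_self]
      simpa using this)
    exact sub_eq_zero.mp this
  -- the aggregated matrix A
  set A : Matrix (Fin M × Fin M) F ℂ := Matrix.of (fun p f => Φ.mulVec (r f) p) with hA
  have hQA : Q = A * A.conjTranspose := by
    rw [hQ]
    ext p q
    simp [Matrix.sum_apply, Matrix.mul_apply, Matrix.conjTranspose_apply, hA]
  set R : Matrix (Fin N) F ℂ := Matrix.of (fun i f => r f i) with hR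
  have hAR : A = Φ * R := by
    ext p f
    simp [hA, hR, Matrix.mul_apply, Matrix.mulVec, dotProduct]
  -- column space of Q equals Φ applied to span of the r f
  have hrangeA : LinearMap.range Q.mulVecLin = LinearMap.range A.mulVecLin := by
    rw [hQA]
    have hle : LinearMap.range (A * A.conjTranspose).mulVecLin ≤ LinearMap.range A.mulVecLin := by
      rw [Matrix.mulVecLin_mul, LinearMap.range_comp]
      exact LinearMap.map_le_range
    refine Submodule.eq_of_le_of_finrank_le hle ?_
    open ComplexOrder in
    have h1 := Matrix.rank_self_mul_conjTranspose A
    unfold Matrix.rank at h1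
    omega
  have hrangeQ : LinearMap.range Q.mulVecLin
      = Submodule.map Φ.mulVecLin (Submodule.span ℂ (Set.range r)) := by
    rw [hrangeA, hAR, Matrix.mulVecLin_mul, LinearMap.range_comp, Matrix.range_mulVecLin]
    rfl
  have hVspan : Submodule.span ℂ (Set.range V.transpose)
      = Submodule.map Φ.mulVecLin (Submodule.span ℂ (Set.range r)) := by
    rw [hspan, show Set.range Q.transpose = Set.range Q.col from rfl, ← Matrix.range_mulVecLin, hrangeQ]
  -- elements of the span of the r f are supported in S'
  have hspansupp : ∀ x ∈ Submodule.span ℂ (Set.range r), Function.support x ⊆ S' := by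
    intro x hx
    let P : Submodule ℂ (Fin N → ℂ) :=
      { carrier := {x | Function.support x ⊆ S'}
        zero_mem' := by simp
        add_mem' := fun {a b} ha hb =>
          subset_trans (Function.support_add a b) (Set.union_subset ha hb)
        smul_mem' := fun c a ha =>
          subset_trans (Function.support_const_smul_subset c a) ha }
    have : Submodule.span ℂ (Set.range r) ≤ P := by
      rw [Submodule.span_le]
      rintro y ⟨f, rfl⟩
      exact fun i hi => Set.mem_iUnion.2 ⟨f, hi⟩
    exact this hx
  -- choose a solution U
  have hcol : ∀ l : Fin L, ∃ u : Fin N → ℂ,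
      u ∈ Submodule.span ℂ (Set.range r) ∧ Φ.mulVec u = V.transpose l := by
    intro l
    have : V.transpose l ∈ Submodule.span ℂ (Set.range V.transpose) :=
      Submodule.subset_span ⟨l, rfl⟩
    rw [hVspan] at this
    obtain ⟨u, hu, hu2⟩ := this
    exact ⟨u, hu, hu2⟩
  choose u humem huvec using hcol
  set U : Matrix (Fin N) (Fin L) ℂ := Matrix.of (fun i l => u l i) with hU
  have hUV : Φ * U = V := by
    ext p l
    have := congrFun (huvec l) p
    simpa [Matrix.mul_apply, Matrix.mulVec, dotProduct, hU] using this
  have hUsupp : {i | ∃ l, U i l ≠ 0} = S' := by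
    apply Set.eq_of_subset_of_subset
    · rintro i ⟨l, hl⟩
      exact hspansupp (u l) (humem l) hl
    · intro i hi
      obtain ⟨f, hf⟩ := Set.mem_iUnion.1 hi
      by_contra hcon
      simp only [Set.mem_setOf_eq, not_exists, not_not] at hcon
      -- build w in span of columns with w i = 0 but Φ w = Φ (r f)
      have hrf : Φ.mulVec (r f) ∈ Submodule.span ℂ (Set.range V.transpose) := by
        rw [hVspan]
        exact ⟨r f, Submodule.subset_span ⟨f, rfl⟩, rfl⟩
      replace hrf := (Submodule.mem_span_range_iff_exists_fun (R := ℂ)).1 hrf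
      obtain ⟨c, hc⟩ := hrf
      set w : Fin N → ℂ := ∑ l : Fin L, c l • u l with hw
      have hΦw : Φ.mulVec w = Φ.mulVec (r f) := by
        rw [← hc]
        have h1 : Φ.mulVec w = ∑ l : Fin L, c l • (Φ.mulVec (u l)) := by
          show Φ.mulVecLin w = _
          rw [hw, map_sum]
          simp only [_root_.map_smul, Matrix.mulVecLin_apply]
        rw [h1]
        exact Finset.sum_congr rfl (fun l _ => by rw [huvec l])
      have hwsupp : (Function.support (r f)).ncard ≤ Kf :=
        le_trans (Set.ncard_le_ncard (Set.subset_iUnion (fun f => Function.support (r f)) f)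
          (Set.toFinite _)) hS'card
      have hwS' : Function.support w ⊆ S' := by
        have : w ∈ Submodule.span ℂ (Set.range r) :=
          Submodule.sum_mem _ (fun l _ => Submodule.smul_mem _ _ (humem l))
        exact hspansupp w this
      have hweq : w = r f := hinjpair w (r f) hwS' hwsupp hΦw
      have hwi : w i = 0 := by
        rw [hw]
        simp only [Finset.sum_apply, Pi.smul_apply, smul_eq_mul]
        apply Finset.sum_eq_zero
        intro l _
        have : u l i = 0 := hcon l
        simp [this]
      rw [hweq] at hwi
      exact hf hwi
  -- uniqueness
  have huniq : ∀ U' : Matrix (Fin N) (Fin L) ℂ, Φ * U' = V →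
      {i | ∃ l, U' i l ≠ 0}.ncard ≤ Kf → U' = U := by
    intro U' hU'V hU'card
    ext i l
    have hcols : u l = (fun j => U' j l) := by
      apply hinjpair
      · exact hspansupp (u l) (humem l)
      · refine le_trans (Set.ncard_le_ncard ?_ (Set.toFinite _)) hU'card
        intro j hj
        exact ⟨l, hj⟩
      · rw [huvec l]
        funext p
        have h := congrFun (congrFun hU'V p) l
        simp only [Matrix.mul_apply] at h
        simp only [Matrix.transpose_apply, Matrix.mulVec, dotProduct]
        rw [← h]
    exact (congrFun hcols i).symm
  constructor
  · exact ⟨U, hUV, hUsupp⟩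
  · intro U' hU'V hU'card
    rw [huniq U' hU'V hU'card, hUsupp]
end

section
/- Let T be an M×N complex full spark matrix with M ≤ N, and let x ∈ ℂ^N be nonzero with support of size N_z > M. Define h_i ∈ ℂ^N, 1 ≤ i ≤ M, by (h_i)_j = T_{ij} x_j. Then the h_i span an M-dimensional subspace of ℂ^N, while the null space of T̄ has dimension N − M; hence if 2M > N, not all h_i can lie in the null space of T̄. -/
open Matrix

theorem stmt19 {M N : ℕ} (T : Matrix (Fin M) (Fin N) ℂ)
    (hMN : M ≤ N) (hfs : FullSpark T)
    (x : Fin N → ℂ) (hx : x ≠ 0) (hsupp : M < {j | x j ≠ 0}.ncard)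
    (h : Fin M → Fin N → ℂ) (hh : ∀ i j, h i j = T i j * x j) :
    Module.finrank ℂ (Submodule.span ℂ (Set.range h)) = M ∧
    Module.finrank ℂ (LinearMap.ker (T.map (starRingEnd ℂ)).mulVecLin) = N - M ∧
    (N < 2 * M → ¬ ∀ i : Fin M, (T.map (starRingEnd ℂ)).mulVec (h i) = 0) := by
  -- h is linearly independent
  have hli : LinearIndependent ℂ h := by
    rw [Fintype.linearIndependent_iff]
    intro c hc
    have hfin : {j | x j ≠ 0}.Finite := Set.toFinite _
    rw [Set.ncard_eq_toFinset_card _ hfin] at hsupp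
    obtain ⟨S, hSsub, hScard⟩ := Finset.exists_subset_card_eq (le_of_lt hsupp)
    have hcardS : Fintype.card S = M := by simp [hScard]
    let e : Fin M ≃ S := (S.equivFinOfCardEq hScard).symm
    have hcols : LinearIndependent ℂ (fun k : Fin M => T.transpose (e k).1) :=
      (hfs S hScard).comp e e.injective
    set B : Matrix (Fin M) (Fin M) ℂ := fun i k => T i (e k) with hB
    have hUnit : IsUnit B := by
      rw [← Matrix.linearIndependent_cols_iff_isUnit]
      exact hcols
    have hinj : Function.Injective B.vecMul := Matrix.vecMul_injective_iff_isUnit.2 hUnit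
    have hvm : B.vecMul c = B.vecMul 0 := by
      funext k
      have hxk : x (e k).1 ≠ 0 := by
        have := hSsub (e k).2
        simpa using (hfin.mem_toFinset.mp this)
      have hck := congrFun hc (e k).1
      simp only [Finset.sum_apply, Pi.smul_apply, smul_eq_mul, Pi.zero_apply, hh] at hck
      have : (∑ i, c i * T i (e k).1) * x (e k).1 = 0 := by
        rw [Finset.sum_mul, ← hck]; exact Finset.sum_congr rfl fun i _ => (mul_assoc _ _ _)
      have h0 : ∑ i, c i * T i (e k).1 = 0 := by
        rcases mul_eq_zero.mp this with h1 | h1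
        · exact h1
        · exact absurd h1 hxk
      simp [Matrix.vecMul, dotProduct, hB, h0]
    intro i
    simpa using congrFun (hinj hvm) i
  have hfr1 : Module.finrank ℂ (Submodule.span ℂ (Set.range h)) = M := by
    rw [finrank_span_eq_card hli, Fintype.card_fin]
  -- rank of conjugate matrix
  have hrankT : T.rank = M := by
    apply le_antisymm
    · simpa using T.rank_le_card_height
    · obtain ⟨S, _, hScard⟩ := Finset.exists_subset_card_eq (s := (Finset.univ : Finset (Fin N))) (by simpa using hMN)
      have hcardS : Fintype.card S = M := by simp [hScard]
      have : M ≤ Module.finrank ℂ (Submodule.span ℂ (Set.range fun j : S => T.transpose j.1)) := by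
        rw [finrank_span_eq_card (hfs S hScard), hcardS]
      refine this.trans ?_
      rw [Matrix.rank, Matrix.range_mulVecLin]
      exact Submodule.finrank_mono (Submodule.span_mono (by rintro _ ⟨j, rfl⟩; exact ⟨j.1, rfl⟩))
  have hrankA : (T.map (starRingEnd ℂ)).rank = M := by
    have : T.map (starRingEnd ℂ) = Tᴴᵀ := by
      ext i j; simp [Matrix.conjTranspose]
    open scoped ComplexOrder in
    rw [this, Matrix.rank_transpose, Matrix.rank_conjTranspose, hrankT]
  have hker : Module.finrank ℂ (LinearMap.ker (T.map (starRingEnd ℂ)).mulVecLin) = N - M := by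
    have hrn := LinearMap.finrank_range_add_finrank_ker (T.map (starRingEnd ℂ)).mulVecLin
    rw [Module.finrank_pi] at hrn
    have : Module.finrank ℂ (LinearMap.range (T.map (starRingEnd ℂ)).mulVecLin) = M := hrankA
    simp [Fintype.card_fin] at hrn
    omega
  refine ⟨hfr1, hker, ?_⟩
  intro hlt hall
  have hle : Submodule.span ℂ (Set.range h) ≤ LinearMap.ker (T.map (starRingEnd ℂ)).mulVecLin := by
    rw [Submodule.span_le]
    rintro _ ⟨i, rfl⟩
    exact hall i
  have := Submodule.finrank_mono hle
  rw [hfr1, hker] at this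
  omega
end
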